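/- arXiv:2002.01682 — 2 statements merged into one kernel-verified Lean document; each statement's English description precedes it below -/
import Mathlib

section
/- Shifted FOM residual colinearity: assume the Arnoldi decomposition A V_m = V_m H_m + h_{m+1,m} v_{m+1} e_m^T with b = β V_m e₁, and for t ≥ 0 such that H_m + tI is invertible define x_m(t) = β V_m (H_m + tI)⁻¹ e₁ and r_m(t) = b − (A + tI) x_m(t). Then r_m(t) = ρ_m(t) v_{m+1}, where ρ_m(t) = −β h_{m+1,m} e_m^T (H_m + tI)⁻¹ e₁; in particular all shifted residuals are colinear with v_{m+1}. -/
/-- Shifted FOM residual colinearity: with an Arnoldi decomposition and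
`x_m(t) = β V (H + tI)⁻¹ e₁`, the residual `r_m(t) = b − (A + tI) x_m(t)`
satisfies `r_m(t) = ρ_m(t) v_{m+1}` with
`ρ_m(t) = −β h_{m+1,m} eₘᵀ (H + tI)⁻¹ e₁`. -/
theorem stmt7 {N m : ℕ} (hm : 0 < m) (A : Matrix (Fin N) (Fin N) ℂ)
    (V : Matrix (Fin N) (Fin m) ℂ) (H : Matrix (Fin m) (Fin m) ℂ)
    (v : Fin N → ℂ) (h : ℂ) (β : ℝ) (b : Fin N → ℂ)
    (horth : V.conjTranspose * V = 1)
    (hb : b = (β : ℂ) • V.mulVec (Pi.single ⟨0, hm⟩ 1))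
    (harn : A * V = V * H + h • Matrix.vecMulVec v (Pi.single (⟨m - 1, by omega⟩ : Fin m) 1))
    (t : ℝ) (ht : 0 ≤ t)
    (hinv : IsUnit (H + (t : ℂ) • (1 : Matrix (Fin m) (Fin m) ℂ)).det) :
    b - (A + (t : ℂ) • (1 : Matrix (Fin N) (Fin N) ℂ)).mulVec
        ((β : ℂ) • V.mulVec ((H + (t : ℂ) • 1)⁻¹.mulVec (Pi.single ⟨0, hm⟩ 1))) =
      (-(β : ℂ) * h * ((H + (t : ℂ) • 1)⁻¹.mulVec (Pi.single ⟨0, hm⟩ 1)) ⟨m - 1, by omega⟩) • v := by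
  set em : Fin m := ⟨m - 1, by omega⟩
  set e1 : Fin m → ℂ := Pi.single ⟨0, hm⟩ 1
  set Ht : Matrix (Fin m) (Fin m) ℂ := H + (t : ℂ) • 1
  set y : Fin m → ℂ := Ht⁻¹.mulVec e1
  have hHty : Ht.mulVec y = e1 := by
    rw [Matrix.mulVec_mulVec, Matrix.mul_nonsing_inv _ hinv, Matrix.one_mulVec]
  have hAV : A.mulVec (V.mulVec y) = V.mulVec (H.mulVec y)
      + (h * y em) • v := by
    rw [Matrix.mulVec_mulVec, harn, Matrix.add_mulVec, Matrix.smul_mulVec,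
      ← Matrix.mulVec_mulVec]
    congr 1
    ext i
    simp [Matrix.mulVec, Matrix.vecMulVec, dotProduct, Pi.single_apply,
      mul_comm, mul_assoc]
    ring
  rw [hb, Matrix.add_mulVec, Matrix.mulVec_smul, Matrix.mulVec_smul, hAV,
    Matrix.smul_mulVec, Matrix.one_mulVec]
  have key : V.mulVec (H.mulVec y) + (t : ℂ) • V.mulVec y = V.mulVec e1 := by
    rw [← hHty]
    show _ = V.mulVec ((H + (t:ℂ) • 1).mulVec y)
    rw [Matrix.add_mulVec, Matrix.mulVec_add, Matrix.smul_mulVec,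
      Matrix.one_mulVec, Matrix.mulVec_smul]
  have : (β:ℂ) • (V.mulVec (H.mulVec y) + (h * y em) • v) + (β:ℂ) • (t:ℂ) • V.mulVec y
      = (β:ℂ) • V.mulVec e1 + ((β:ℂ) * h * y em) • v := by
    rw [← key]
    module
  rw [this]
  ext i
  simp
end

section
/- Hermite-type integral error formula for polynomial interpolation: let f be analytic on an open set Ω, Γ ⊂ Ω a contour winding once around a compact set Σ ⊂ interior of Γ, σ₀,...,σ_m points in Σ, w_m(z) = Π_{k=0}^m (z − σ_k), and p_m the interpolating polynomial of f at the σ_k. Then for every z ∈ Σ, f(z) − p_m(z) = (1/(2πi)) ∮_Γ f(ζ)/(ζ−z) · w_m(z)/w_m(ζ) dζ. -/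
open Complex Polynomial Metric Finset

lemma circleIntegral_finset_sum' {ι : Type*} (s : Finset ι) (g : ι → ℂ → ℂ)
    (c : ℂ) (R : ℝ) (h : ∀ i ∈ s, CircleIntegrable (g i) c R) :
    (∮ ζ in C(c, R), ∑ i ∈ s, g i ζ) = ∑ i ∈ s, ∮ ζ in C(c, R), g i ζ := by
  have key : ∀ θ : ℝ, deriv (circleMap c R) θ • ∑ i ∈ s, g i (circleMap c R θ)
      = ∑ i ∈ s, deriv (circleMap c R) θ • g i (circleMap c R θ) := fun θ => Finset.smul_sum
  simp only [circleIntegral, key]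
  exact intervalIntegral.integral_finset_sum fun i hi => (h i hi).out



/-- Hermite-type integral error formula for polynomial interpolation:
for `f` analytic on `Ω`, a circular contour `Γ = C(c,R)` in `Ω` containing the
compact set `Σ` in its interior, nodes `σ₀,…,σ_m ∈ Σ`, `w_m(z) = Π(z−σ_k)`,
and the interpolating polynomial `p_m`, for every `z ∈ Σ`:
`f(z) − p_m(z) = (1/(2πi)) ∮_Γ f(ζ)/(ζ−z) · w_m(z)/w_m(ζ) dζ`. -/
theorem stmt17 (Ω : Set ℂ) (hΩ : IsOpen Ω) (f : ℂ → ℂ)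
    (hf : DifferentiableOn ℂ f Ω)
    (c : ℂ) (R : ℝ) (hR : 0 < R) (hΓΩ : Metric.closedBall c R ⊆ Ω)
    (S : Set ℂ) (hS : IsCompact S) (hSball : S ⊆ Metric.ball c R)
    (m : ℕ) (σ : Fin (m + 1) → ℂ) (hmem : ∀ k, σ k ∈ S)
    (hinj : Function.Injective σ)
    (p : Polynomial ℂ) (hdeg : p.degree ≤ m)
    (hinterp : ∀ k, p.eval (σ k) = f (σ k)) :
    ∀ z ∈ S, f z - p.eval z =
      (2 * Real.pi * Complex.I)⁻¹ *
        ∮ ζ in C(c, R), f ζ / (ζ - z) *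
          ((∏ k, (z - σ k)) / (∏ k, (ζ - σ k))) := by
  intro z hz
  classical
  have hzball : z ∈ ball c R := hSball hz
  have hσball : ∀ k, σ k ∈ ball c R := fun k => hSball (hmem k)
  have hne : ∀ a ∈ ball c R, ∀ ζ ∈ sphere c R, ζ - a ≠ 0 := by
    intro a ha ζ hζ h
    rw [sub_eq_zero] at h
    subst h
    rw [mem_ball] at ha
    rw [mem_sphere] at hζ
    exact absurd (hζ ▸ ha) (lt_irrefl R)
  have hinjOn : Set.InjOn σ (Finset.univ : Finset (Fin (m + 1))) := fun a _ b _ h => hinj h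
  -- Lagrange basis values at z
  obtain ⟨L, hL⟩ : ∃ L : Fin (m + 1) → ℂ,
      L = fun j => Polynomial.eval z (Lagrange.basis Finset.univ σ j) := ⟨_, rfl⟩
  -- p as Lagrange interpolant
  have hcard : (#(Finset.univ : Finset (Fin (m + 1))) : WithBot ℕ) = ((m + 1 : ℕ) : WithBot ℕ) := by
    simp
  have hp : p = Lagrange.interpolate Finset.univ σ (fun k => f (σ k)) := by
    refine Lagrange.eq_interpolate_of_eval_eq _ hinjOn ?_ (fun i _ => hinterp i)
    rw [hcard]
    exact lt_of_le_of_lt hdeg (by exact_mod_cast Nat.lt_succ_self m)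
  have hpz : p.eval z = ∑ j, f (σ j) * L j := by
    rw [hp, Lagrange.interpolate_apply]
    simp [hL, eval_finset_sum]
  -- the nodal polynomial
  obtain ⟨W, hWdef⟩ : ∃ W : ℂ[X], W = ∏ k, (X - C (σ k)) := ⟨_, rfl⟩
  have hWe : ∀ x : ℂ, W.eval x = ∏ k, (x - σ k) := by
    intro x; simp [hWdef, eval_prod]
  have hWnd : W.natDegree = m + 1 := by
    rw [hWdef, natDegree_prod _ _ fun k _ => X_sub_C_ne_zero (σ k)]
    simp
  -- continuity / integrability facts
  have hfc : ContinuousOn f (sphere c R) :=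
    hf.continuousOn.mono (sphere_subset_closedBall.trans hΓΩ)
  have hint : ∀ a ∈ ball c R, CircleIntegrable (fun ζ => (ζ - a)⁻¹ • f ζ) c R := by
    intro a ha
    refine ContinuousOn.circleIntegrable hR.le (ContinuousOn.fun_smul ?_ hfc)
    exact ((continuousOn_id.sub continuousOn_const).inv₀ fun ζ hζ => hne a ha ζ hζ)
  have hdc : DiffContOnCl ℂ f (ball c R) := by
    apply DifferentiableOn.diffContOnCl
    rw [closure_ball c hR.ne']
    exact hf.mono hΓΩ
  -- pointwise partial fraction decomposition on the sphere
  have key : Set.EqOn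
      (fun ζ => f ζ / (ζ - z) * ((∏ k, (z - σ k)) / (∏ k, (ζ - σ k))))
      (fun ζ => (ζ - z)⁻¹ • f ζ - ∑ j, L j • ((ζ - σ j)⁻¹ • f ζ)) (sphere c R) := by
    intro ζ hζ
    have hζz : ζ - z ≠ 0 := hne z hzball ζ hζ
    have hζσ : ∀ j, ζ - σ j ≠ 0 := fun j => hne (σ j) (hσball j) ζ hζ
    have hWζ : W.eval ζ ≠ 0 := by
      rw [hWe]; exact Finset.prod_ne_zero_iff.2 fun j _ => hζσ j
    obtain ⟨Q, hQ⟩ : ∃ Q : ℂ[X], (X - C ζ) * Q = W - C (W.eval ζ) :=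
      ⟨_, mul_divByMonic_eq_iff_isRoot.2 (by simp [IsRoot])⟩
    have hQz : (z - ζ) * Q.eval z = W.eval z - W.eval ζ := by
      have := congrArg (Polynomial.eval z) hQ
      simpa using this
    have hQnodes : ∀ j : Fin (m + 1), Q.eval (σ j) = W.eval ζ * (ζ - σ j)⁻¹ := by
      intro j
      have h1 : (σ j - ζ) * Q.eval (σ j) = W.eval (σ j) - W.eval ζ := by
        have := congrArg (Polynomial.eval (σ j)) hQ
        simpa using this
      have h2 : W.eval (σ j) = 0 := by
        rw [hWe]
        exact Finset.prod_eq_zero (Finset.mem_univ j) (by simp)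
      rw [h2, zero_sub] at h1
      rw [eq_comm, mul_inv_eq_iff_eq_mul₀ (hζσ j)]
      linear_combination h1
    have hQdeg : Q.degree < #(Finset.univ : Finset (Fin (m + 1))) := by
      have hWCnd : (W - C (W.eval ζ)).natDegree = m + 1 := by rw [natDegree_sub_C, hWnd]
      have hQne : Q ≠ 0 := by
        intro h0
        rw [h0, mul_zero] at hQ
        rw [← hQ] at hWCnd
        simp at hWCnd
      have hnd : Q.natDegree = m := by
        have := natDegree_mul (X_sub_C_ne_zero ζ) hQne
        rw [hQ, hWCnd, natDegree_X_sub_C] at this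
        omega
      rw [hcard]
      calc Q.degree ≤ (Q.natDegree : WithBot ℕ) := degree_le_natDegree
        _ < _ := by rw [hnd]; exact_mod_cast Nat.lt_succ_self m
    have hQint : Q = Lagrange.interpolate Finset.univ σ (fun j => W.eval ζ * (ζ - σ j)⁻¹) :=
      Lagrange.eq_interpolate_of_eval_eq _ hinjOn hQdeg fun j _ => hQnodes j
    have hQzsum : Q.eval z = ∑ j, W.eval ζ * (ζ - σ j)⁻¹ * L j := by
      rw [hQint, Lagrange.interpolate_apply]
      simp [hL, eval_finset_sum]
    have hsum : ∑ j, L j * ((ζ - σ j)⁻¹ * f ζ) = Q.eval z * (W.eval ζ)⁻¹ * f ζ := by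
      rw [hQzsum, Finset.sum_mul, Finset.sum_mul]
      refine Finset.sum_congr rfl fun j _ => ?_
      have : eval ζ W * (ζ - σ j)⁻¹ * L j * (eval ζ W)⁻¹ * f ζ
          = eval ζ W * (eval ζ W)⁻¹ * ((ζ - σ j)⁻¹ * L j * f ζ) := by ring
      rw [this, mul_inv_cancel₀ hWζ, one_mul]
      ring
    have hWz : W.eval z = W.eval ζ - (ζ - z) * Q.eval z := by linear_combination -hQz
    simp only [smul_eq_mul]
    rw [hsum, ← hWe z, ← hWe ζ, hWz]
    field_simp [hζz, hWζ]
  rw [circleIntegral.integral_congr hR.le key]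
  have hintsum : CircleIntegrable (fun ζ => ∑ j, L j • ((ζ - σ j)⁻¹ • f ζ)) c R := by
    refine ContinuousOn.circleIntegrable hR.le ?_
    refine continuousOn_finset_sum _ fun j _ => ContinuousOn.fun_const_smul ?_ _
    exact ContinuousOn.fun_smul
      ((continuousOn_id.sub continuousOn_const).inv₀ fun ζ hζ => hne (σ j) (hσball j) ζ hζ) hfc
  rw [circleIntegral.integral_sub (hint z hzball) hintsum]
  have hintL : ∀ j : Fin (m + 1),
      CircleIntegrable (fun ζ => L j • ((ζ - σ j)⁻¹ • f ζ)) c R := by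
    intro j
    refine ContinuousOn.circleIntegrable hR.le (ContinuousOn.fun_const_smul ?_ _)
    exact ContinuousOn.fun_smul
      ((continuousOn_id.sub continuousOn_const).inv₀ fun ζ hζ => hne (σ j) (hσball j) ζ hζ) hfc
  rw [circleIntegral_finset_sum' Finset.univ (fun j ζ => L j • ((ζ - σ j)⁻¹ • f ζ)) c R
    (fun j _ => hintL j)]
  have hcauchy : ∀ a ∈ ball c R,
      (∮ ζ in C(c, R), (ζ - a)⁻¹ • f ζ) = (2 * Real.pi * I : ℂ) • f a := fun a ha =>
    hdc.circleIntegral_sub_inv_smul ha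
  rw [hcauchy z hzball]
  have : ∀ j : Fin (m + 1), (∮ ζ in C(c, R), L j • ((ζ - σ j)⁻¹ • f ζ))
      = L j • ((2 * Real.pi * I : ℂ) • f (σ j)) := by
    intro j
    rw [circleIntegral.integral_smul, hcauchy (σ j) (hσball j)]
  simp only [this]
  have h2πI : (2 * (Real.pi : ℂ) * I) ≠ 0 := by
    simp [Real.pi_ne_zero, I_ne_zero]
  rw [hpz]
  simp only [smul_eq_mul]
  rw [mul_sub, ← mul_assoc, inv_mul_cancel₀ h2πI, one_mul, Finset.mul_sum]
  congr 1
  refine Finset.sum_congr rfl fun j _ => ?_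
  rw [show (2 * (Real.pi : ℂ) * I)⁻¹ * (L j * (2 * (Real.pi : ℂ) * I * f (σ j)))
      = (2 * (Real.pi : ℂ) * I)⁻¹ * (2 * (Real.pi : ℂ) * I) * (L j * f (σ j)) by ring,
    inv_mul_cancel₀ h2πI, one_mul, mul_comm]
end
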